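/- For any fixed λ ∈ F_q^×, the expected number of nonzero vectors v with T v = λ v, for T chosen uniformly from GL_n(F_q), equals 1 for every n ≥ 1. -/

import Mathlib

open Matrix

section Aux

variable {F : Type} [Field F] [Fintype F] [DecidableEq F] {n : ℕ}

set_option linter.unusedSectionVars false

/-- GL acts on vectors by `mulVec`. -/
instance glAction : MulAction (GL (Fin n) F) (Fin n → F) where
  smul T v := (T : Matrix (Fin n) (Fin n) F).mulVec v
  one_smul v := by
    show ((1 : GL (Fin n) F) : Matrix (Fin n) (Fin n) F).mulVec v = v
    simp
  mul_smul T S v := by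
    show ((T * S : GL (Fin n) F) : Matrix (Fin n) (Fin n) F).mulVec v
      = (T : Matrix (Fin n) (Fin n) F).mulVec ((S : Matrix (Fin n) (Fin n) F).mulVec v)
    rw [Matrix.GeneralLinearGroup.coe_mul, ← Matrix.mulVec_mulVec]

lemma gl_smul_def (T : GL (Fin n) F) (v : Fin n → F) :
    T • v = (T : Matrix (Fin n) (Fin n) F).mulVec v := rfl

/-- A linear automorphism of `Fin n → F` as an element of `GL (Fin n) F`. -/
def glOfEquiv (g : (Fin n → F) ≃ₗ[F] (Fin n → F)) : GL (Fin n) F where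
  val := LinearMap.toMatrix' (g : (Fin n → F) →ₗ[F] (Fin n → F))
  inv := LinearMap.toMatrix' (g.symm : (Fin n → F) →ₗ[F] (Fin n → F))
  val_inv := by
    rw [← LinearMap.toMatrix'_comp, ← LinearMap.toMatrix'_id]
    congr 1
    ext x : 1
    simp
  inv_val := by
    rw [← LinearMap.toMatrix'_comp, ← LinearMap.toMatrix'_id]
    congr 1
    ext x : 1
    simp

lemma glOfEquiv_smul (g : (Fin n → F) ≃ₗ[F] (Fin n → F)) (v : Fin n → F) :
    (glOfEquiv g) • v = g v := by
  show (LinearMap.toMatrix' (g : (Fin n → F) →ₗ[F] (Fin n → F))).mulVec v = g v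
  rw [← Matrix.toLin'_apply, Matrix.toLin'_toMatrix']
  rfl

/-- Every nonzero vector is in the GL-orbit of a standard basis vector. -/
lemma exists_gl_single (i : Fin n) {u : Fin n → F} (hu : u ≠ 0) :
    ∃ T : GL (Fin n) F, T • (Pi.single i 1 : Fin n → F) = u := by
  classical
  have hli := (linearIndepOn_singleton_iff F (v := (id : (Fin n → F) → (Fin n → F))) (i := u)).mpr hu
  set s := hli.extend (Set.subset_univ ({u} : Set (Fin n → F))) with hs
  let B : Module.Basis s F (Fin n → F) := Module.Basis.extend hli
  have hmem : u ∈ s := hli.subset_extend _ rfl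
  have hcard : Fintype.card s = Fintype.card (Fin n) := by
    rw [Fintype.card_fin]
    have h1 := Module.finrank_eq_card_basis B
    have h2 : Module.finrank F (Fin n → F) = n := by simp
    omega
  let e : Fin n ≃ s := Fintype.equivOfCardEq (by rw [hcard])
  let e' : Fin n ≃ s := e.trans (Equiv.swap (e i) ⟨u, hmem⟩)
  let B' : Module.Basis (Fin n) F (Fin n → F) := B.reindex e'.symm
  have hB' : B' i = u := by
    have h3 : B' i = B (e' i) := by simp [B', Module.Basis.reindex_apply]
    rw [h3]
    have h4 : e' i = ⟨u, hmem⟩ := by simp [e', Equiv.swap_apply_left]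
    rw [h4]
    exact Module.Basis.extend_apply_self hli _
  let g : (Fin n → F) ≃ₗ[F] (Fin n → F) := (Pi.basisFun F (Fin n)).equiv B' (Equiv.refl _)
  refine ⟨glOfEquiv g, ?_⟩
  rw [glOfEquiv_smul]
  have h0 : (Pi.single i 1 : Fin n → F) = Pi.basisFun F (Fin n) i := by
    simp [Pi.basisFun_apply]
  rw [h0]
  have := Module.Basis.equiv_apply (Pi.basisFun F (Fin n)) i B' (Equiv.refl _)
  simpa [hB'] using this

/-- The orbit of any nonzero vector is exactly the set of nonzero vectors. -/
lemma orbit_eq_nonzero {v : Fin n → F} (hv : v ≠ 0) :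
    MulAction.orbit (GL (Fin n) F) v = {w : Fin n → F | w ≠ 0} := by
  classical
  have hne : Nonempty (Fin n) := by
    by_contra h
    exact hv (funext fun i => absurd ⟨i⟩ h)
  obtain ⟨i⟩ := hne
  ext w
  constructor
  · rintro ⟨T, rfl⟩
    intro h0
    apply hv
    have h1 : (T⁻¹ * T) • v = T⁻¹ • (0 : Fin n → F) := by
      rw [mul_smul]
      show T⁻¹ • (T • v) = _
      rw [show T • v = (0 : Fin n → F) from h0]
    rw [inv_mul_cancel, one_smul] at h1
    rw [h1, gl_smul_def]
    simp [Matrix.mulVec_zero]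
  · intro hw
    obtain ⟨T1, hT1⟩ := exists_gl_single i hv
    obtain ⟨T2, hT2⟩ := exists_gl_single i (hw : w ≠ 0)
    refine ⟨T2 * T1⁻¹, ?_⟩
    show (T2 * T1⁻¹) • v = w
    rw [← hT1, ← mul_smul, mul_assoc, inv_mul_cancel, mul_one, hT2]

end Aux

/-- For any fixed `λ ∈ Fˣ`, the expected number of nonzero `λ`-eigenvectors of a
uniformly random `T ∈ GL n F` equals `1`, for every `n ≥ 1`. -/
theorem stmt1 (F : Type) [Field F] [Fintype F] [DecidableEq F] (n : ℕ) (hn : 1 ≤ n) (lam : Fˣ) :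
    (∑ T : GL (Fin n) F,
        ((Finset.univ.filter (fun v : Fin n → F =>
            v ≠ 0 ∧ (T : Matrix (Fin n) (Fin n) F).mulVec v = (lam : F) • v)).card : ℚ))
      / (Fintype.card (GL (Fin n) F) : ℚ) = 1 := by
  classical
  -- the scalar matrix `lam • 1` as a unit
  let u : GL (Fin n) F := Units.map (algebraMap F (Matrix (Fin n) (Fin n) F)).toMonoidHom lam
  have hu_smul : ∀ w : Fin n → F, u • w = (lam : F) • w := by
    intro w
    rw [gl_smul_def]
    show ((algebraMap F (Matrix (Fin n) (Fin n) F)) (lam : F)).mulVec w = (lam : F) • w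
    rw [Algebra.algebraMap_eq_smul_one, Matrix.smul_mulVec, Matrix.one_mulVec]
  -- the set of nonzero vectors
  set S : Finset (Fin n → F) := Finset.univ.filter (fun v => v ≠ 0) with hS
  -- for each nonzero v, the eigen-count equals the stabilizer size
  have hcount : ∀ v : Fin n → F, v ≠ 0 →
      (Finset.univ.filter (fun T : GL (Fin n) F =>
        (T : Matrix (Fin n) (Fin n) F).mulVec v = (lam : F) • v)).card * S.card
        = Fintype.card (GL (Fin n) F) := by
    intro v hv
    have hstab : (Finset.univ.filter (fun T : GL (Fin n) F =>
        (T : Matrix (Fin n) (Fin n) F).mulVec v = (lam : F) • v)).card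
        = Fintype.card (MulAction.stabilizer (GL (Fin n) F) v) := by
      have e1 : Fintype.card (MulAction.stabilizer (GL (Fin n) F) v)
          = Fintype.card {T : GL (Fin n) F // T • v = v} :=
        Nat.card_eq_fintype_card.symm.trans
          ((Nat.card_congr (Equiv.subtypeEquivRight
            (fun T => MulAction.mem_stabilizer_iff))).trans Nat.card_eq_fintype_card)
      rw [e1, Fintype.card_subtype]
      refine (Finset.card_bij (fun T _ => u * T) ?_ ?_ ?_).symm
      · intro T hT
        simp only [Finset.mem_filter, Finset.mem_univ, true_and] at hT ⊢
        rw [← gl_smul_def, mul_smul, hT, hu_smul]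
      · intro a _ b _ h
        exact mul_left_cancel h
      · intro T hT
        simp only [Finset.mem_filter, Finset.mem_univ, true_and] at hT
        refine ⟨u⁻¹ * T, ?_, by show u * (u⁻¹ * T) = T; rw [← mul_assoc, mul_inv_cancel, one_mul]⟩
        simp only [Finset.mem_filter, Finset.mem_univ, true_and]
        rw [mul_smul, gl_smul_def T, hT, ← hu_smul, ← mul_smul,
          inv_mul_cancel, one_smul]
    have horb : Fintype.card (MulAction.orbit (GL (Fin n) F) v) = S.card := by
      have e2 : Fintype.card (MulAction.orbit (GL (Fin n) F) v)
          = Fintype.card {w : Fin n → F // w ≠ 0} :=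
        Nat.card_eq_fintype_card.symm.trans
          ((Nat.card_congr (Equiv.setCongr (orbit_eq_nonzero hv))).trans
            Nat.card_eq_fintype_card)
      rw [e2, hS, Fintype.card_subtype]
    rw [hstab, ← horb, mul_comm]
    exact MulAction.card_orbit_mul_card_stabilizer_eq_card_group (GL (Fin n) F) v
  -- double counting
  have hswap : (∑ T : GL (Fin n) F, (Finset.univ.filter (fun v : Fin n → F =>
      v ≠ 0 ∧ (T : Matrix (Fin n) (Fin n) F).mulVec v = (lam : F) • v)).card)
      = ∑ v ∈ S, (Finset.univ.filter (fun T : GL (Fin n) F =>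
          (T : Matrix (Fin n) (Fin n) F).mulVec v = (lam : F) • v)).card := by
    simp only [Finset.card_filter]
    rw [Finset.sum_comm, hS, Finset.sum_filter]
    refine Finset.sum_congr rfl fun v _ => ?_
    by_cases hv : v ≠ 0
    · simp [hv]
    · simp [hv]
  have hK : 0 < S.card := by
    refine Finset.card_pos.mpr ⟨Pi.single (⟨0, hn⟩ : Fin n) 1, ?_⟩
    rw [hS]
    simp only [Finset.mem_filter, Finset.mem_univ, true_and]
    intro h
    have := congrFun h ⟨0, hn⟩
    simp at this
  have htotal : (∑ T : GL (Fin n) F, (Finset.univ.filter (fun v : Fin n → F =>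
      v ≠ 0 ∧ (T : Matrix (Fin n) (Fin n) F).mulVec v = (lam : F) • v)).card)
      = Fintype.card (GL (Fin n) F) := by
    have h1 : (∑ v ∈ S, (Finset.univ.filter (fun T : GL (Fin n) F =>
        (T : Matrix (Fin n) (Fin n) F).mulVec v = (lam : F) • v)).card) * S.card
        = Fintype.card (GL (Fin n) F) * S.card := by
      rw [Finset.sum_mul]
      rw [Finset.sum_congr rfl (fun v hv => hcount v (by
        rw [hS] at hv; exact (Finset.mem_filter.mp hv).2))]
      rw [Finset.sum_const, smul_eq_mul, mul_comm]
    rw [hswap]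
    exact Nat.eq_of_mul_eq_mul_right hK h1
  have hGpos : (0 : ℚ) < (Fintype.card (GL (Fin n) F) : ℚ) := by
    exact_mod_cast Fintype.card_pos
  rw [div_eq_one_iff_eq (ne_of_gt hGpos)]
  exact_mod_cast congrArg (Nat.cast : ℕ → ℚ) htotal
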